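/- The modified matching polynomial is of exponential type: for every finite simple graph G = (V,E) and all x, y, Σ_{S ⊆ V} M(G[S], x) · M(G[V∖S], y) = M(G, x + y), where the sum is over all subsets S of V and M of the empty graph is 1. -/

import Mathlib

open scoped Classical

noncomputable section

/-- `m_k(G)`: the number of matchings of size `k` in `G`, i.e. sets of `k` pairwise
disjoint edges (so `m_0(G) = 1`). -/
def matchCount {V : Type*} [Fintype V] (G : SimpleGraph V) (k : ℕ) : ℕ :=
  (G.edgeFinset.powerset.filter (fun M : Finset (Sym2 V) =>
    M.card = k ∧ (M : Set (Sym2 V)).Pairwise (fun e f => ∀ w, ¬(w ∈ e ∧ w ∈ f)))).card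

/-- The modified matching polynomial
`M(G,x) = ∑_{k=0}^{⌊n/2⌋} (-1)^k m_k(G) x^{n-k}` (equal to `1` on the empty graph). -/
def modMatch {V : Type*} [Fintype V] (G : SimpleGraph V) (x : ℂ) : ℂ :=
  ∑ k ∈ Finset.range (Fintype.card V / 2 + 1),
    (-1 : ℂ) ^ k * (matchCount G k : ℂ) * x ^ (Fintype.card V - k)

namespace ExpType

open Finset

variable {V : Type*} [Fintype V]

/-- The finset of all matchings of `G`. -/
def matchings (G : SimpleGraph V) : Finset (Finset (Sym2 V)) :=
  G.edgeFinset.powerset.filter (fun M : Finset (Sym2 V) =>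
    (M : Set (Sym2 V)).Pairwise (fun e f => ∀ w, ¬(w ∈ e ∧ w ∈ f)))

lemma mem_matchings {G : SimpleGraph V} {M : Finset (Sym2 V)} :
    M ∈ matchings G ↔ M ⊆ G.edgeFinset ∧
      (M : Set (Sym2 V)).Pairwise (fun e f => ∀ w, ¬(w ∈ e ∧ w ∈ f)) := by
  simp [matchings, Finset.mem_filter, Finset.mem_powerset]

/-- Vertex support of a set of edges. -/
def supp (M : Finset (Sym2 V)) : Finset V :=
  Finset.univ.filter (fun v => ∃ e ∈ M, v ∈ e)

lemma mem_supp {M : Finset (Sym2 V)} {v : V} : v ∈ supp M ↔ ∃ e ∈ M, v ∈ e := by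
  simp [supp]

lemma supp_mono {M N : Finset (Sym2 V)} (h : M ⊆ N) : supp M ⊆ supp N := by
  intro v hv
  rcases mem_supp.1 hv with ⟨e, he, hve⟩
  exact mem_supp.2 ⟨e, h he, hve⟩

lemma supp_union {M N : Finset (Sym2 V)} : supp (M ∪ N) = supp M ∪ supp N := by
  ext v
  simp only [mem_supp, Finset.mem_union, Finset.mem_union]
  aesop

lemma card_supp {G : SimpleGraph V} {M : Finset (Sym2 V)} (hM : M ∈ matchings G) :
    (supp M).card = 2 * M.card := by
  obtain ⟨hsub, hpw⟩ := mem_matchings.1 hM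
  have hb : supp M = M.biUnion (fun e => Finset.univ.filter (· ∈ e)) := by
    ext v; simp [mem_supp]
  rw [hb, Finset.card_biUnion]
  · rw [Finset.sum_congr rfl (fun e he => ?_), Finset.sum_const, smul_eq_mul, mul_comm]
    -- each edge has exactly two endpoints
    have hedge : e ∈ G.edgeSet := SimpleGraph.mem_edgeFinset.1 (hsub he)
    have hnd : ¬ e.IsDiag := SimpleGraph.not_isDiag_of_mem_edgeSet G hedge
    induction e with
    | h a b =>
      have hab : a ≠ b := by simpa [Sym2.isDiag_iff_proj_eq] using hnd
      have : Finset.univ.filter (· ∈ s(a, b)) = {a, b} := by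
        ext v; simp [Sym2.mem_iff]
      rw [this, Finset.card_insert_of_notMem (by simpa using hab), Finset.card_singleton]
  · intro e he f hf hef
    rw [Function.onFun, Finset.disjoint_left]
    intro v hv hv'
    exact hpw he hf hef v ⟨(Finset.mem_filter.1 hv).2, (Finset.mem_filter.1 hv').2⟩

lemma two_mul_card_le {G : SimpleGraph V} {M : Finset (Sym2 V)} (hM : M ∈ matchings G) :
    2 * M.card ≤ Fintype.card V := by
  rw [← card_supp hM]
  exact Finset.card_le_univ _

/-- `modMatch` as a sum over all matchings. -/
lemma modMatch_eq_sum (G : SimpleGraph V) (x : ℂ) :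
    modMatch G x = ∑ M ∈ matchings G,
      (-1 : ℂ) ^ M.card * x ^ (Fintype.card V - M.card) := by
  rw [← Finset.sum_fiberwise_of_maps_to (g := Finset.card)
    (t := Finset.range (Fintype.card V / 2 + 1))
    (fun M hM => Finset.mem_range.2 (Nat.lt_succ_of_le (Nat.le_div_iff_mul_le (by norm_num)
      |>.2 (by have := two_mul_card_le hM; omega)))) _]
  unfold modMatch
  refine Finset.sum_congr rfl (fun k _ => ?_)
  have hcnt : matchCount G k = ((matchings G).filter (fun M => M.card = k)).card := by
    unfold matchCount matchings
    congr 1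
    ext M
    simp only [Finset.mem_filter, Finset.mem_powerset]
    tauto
  have hc : ∀ M ∈ (matchings G).filter (fun M => M.card = k),
      (-1 : ℂ) ^ M.card * x ^ (Fintype.card V - M.card)
        = (-1 : ℂ) ^ k * x ^ (Fintype.card V - k) := fun M hM => by
    rw [(Finset.mem_filter.1 hM).2]
  rw [Finset.sum_congr rfl hc, Finset.sum_const, nsmul_eq_mul, hcnt]
  push_cast
  ring


lemma map_val_edge {G : SimpleGraph V} {s : Finset V} {e : Sym2 ↥(↑s : Set V)}
    (he : e ∈ (G.induce (↑s : Set V)).edgeSet) :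
    Sym2.map Subtype.val e ∈ G.edgeSet := by
  induction e with
  | h a b => simpa [SimpleGraph.mem_edgeSet] using he

lemma modMatch_induce (G : SimpleGraph V) (s : Finset V) (x : ℂ) :
    modMatch (G.induce (↑s : Set V)) x
      = ∑ M ∈ (matchings G).filter (fun M => supp M ⊆ s),
          (-1 : ℂ) ^ M.card * x ^ (s.card - M.card) := by
  classical
  have hinj : Function.Injective (Sym2.map (Subtype.val : ↥(↑s : Set V) → V)) :=
    Sym2.map.injective Subtype.val_injective
  have hcard : Fintype.card ↥(↑s : Set V) = s.card := by
    simp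
  rw [modMatch_eq_sum]
  refine Finset.sum_nbij' (i := fun M => M.image (Sym2.map (Subtype.val)))
    (j := fun M => (G.induce (↑s : Set V)).edgeFinset.filter
      (fun e => Sym2.map Subtype.val e ∈ M)) ?_ ?_ ?_ ?_ ?_
  · -- hi : image is a matching of G with support in s
    intro M' hM'
    obtain ⟨hsub, hpw⟩ := mem_matchings.1 hM'
    rw [Finset.mem_filter]
    refine ⟨mem_matchings.2 ⟨?_, ?_⟩, ?_⟩
    · intro f hf
      rcases Finset.mem_image.1 hf with ⟨e, he, rfl⟩
      exact SimpleGraph.mem_edgeFinset.2 (map_val_edge (SimpleGraph.mem_edgeFinset.1 (hsub he)))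
    · intro f hf g hg hfg w hw
      rcases Finset.mem_image.1 hf with ⟨e, he, rfl⟩
      rcases Finset.mem_image.1 hg with ⟨e', he', rfl⟩
      have hee' : e ≠ e' := fun h => hfg (by rw [h])
      rcases Sym2.mem_map.1 hw.1 with ⟨a, ha, ha'⟩
      rcases Sym2.mem_map.1 hw.2 with ⟨b, hb, hb'⟩
      have hab : a = b := Subtype.val_injective (by rw [ha', hb'])
      exact hpw he he' hee' a ⟨ha, hab ▸ hb⟩
    · intro v hv
      rcases mem_supp.1 hv with ⟨f, hf, hvf⟩
      rcases Finset.mem_image.1 hf with ⟨e, he, rfl⟩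
      rcases Sym2.mem_map.1 hvf with ⟨a, _, ha'⟩
      have := a.2
      rw [ha'] at this
      simpa using this
  · -- hj : pullback is a matching of induce
    intro M hM
    obtain ⟨hMm, _⟩ := Finset.mem_filter.1 hM
    obtain ⟨_, hpw⟩ := mem_matchings.1 hMm
    refine mem_matchings.2 ⟨Finset.filter_subset _ _, ?_⟩
    intro e he f hf hef w hw
    obtain ⟨_, heM⟩ := Finset.mem_filter.1 he
    obtain ⟨_, hfM⟩ := Finset.mem_filter.1 hf
    have : Sym2.map Subtype.val e ≠ Sym2.map Subtype.val f := fun h => hef (hinj h)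
    exact hpw heM hfM this (w : V)
      ⟨Sym2.mem_map.2 ⟨w, hw.1, rfl⟩, Sym2.mem_map.2 ⟨w, hw.2, rfl⟩⟩
  · -- left inverse
    intro M' hM'
    obtain ⟨hsub, _⟩ := mem_matchings.1 hM'
    ext e
    simp only [Finset.mem_filter, Finset.mem_image]
    constructor
    · rintro ⟨_, e', he', hee'⟩
      have := hinj hee'
      rwa [← this]
    · intro he
      exact ⟨hsub he, e, he, rfl⟩
  · -- right inverse
    intro M hM
    obtain ⟨hMm, hsupp⟩ := Finset.mem_filter.1 hM
    obtain ⟨hsub, _⟩ := mem_matchings.1 hMm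
    ext f
    simp only [Finset.mem_image, Finset.mem_filter]
    constructor
    · rintro ⟨e, ⟨_, heM⟩, rfl⟩
      exact heM
    · intro hf
      have hfe : f ∈ G.edgeSet := SimpleGraph.mem_edgeFinset.1 (hsub hf)
      induction f with
      | h a b =>
        have ha : a ∈ (↑s : Set V) := by
          have : a ∈ supp M := mem_supp.2 ⟨s(a, b), hf, Sym2.mem_mk_left a b⟩
          simpa using hsupp this
        have hb : b ∈ (↑s : Set V) := by
          have : b ∈ supp M := mem_supp.2 ⟨s(a, b), hf, Sym2.mem_mk_right a b⟩
          simpa using hsupp this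
        refine ⟨s(⟨a, ha⟩, ⟨b, hb⟩), ⟨?_, ?_⟩, ?_⟩
        · exact SimpleGraph.mem_edgeFinset.2 (by simpa [SimpleGraph.mem_edgeSet] using hfe)
        · simpa using hf
        · simp
  · -- values agree
    intro M' hM'
    rw [Finset.card_image_of_injective _ hinj, hcard]


lemma sym2_exists_mem (e : Sym2 V) : ∃ w : V, w ∈ e := by
  induction e with
  | h a b => exact ⟨a, Sym2.mem_mk_left a b⟩

lemma subset_mem_matchings {G : SimpleGraph V} {M A : Finset (Sym2 V)}
    (hM : M ∈ matchings G) (hA : A ⊆ M) : A ∈ matchings G := by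
  obtain ⟨hs, hp⟩ := mem_matchings.1 hM
  exact mem_matchings.2 ⟨hA.trans hs, hp.mono (Finset.coe_subset.2 hA)⟩

lemma disjoint_of_supp_subset {S : Finset V} {M1 M2 : Finset (Sym2 V)}
    (hs1 : supp M1 ⊆ S) (hs2 : supp M2 ⊆ Sᶜ) : Disjoint M1 M2 := by
  rw [Finset.disjoint_left]
  intro e he1 he2
  obtain ⟨w, hw⟩ := sym2_exists_mem e
  exact Finset.mem_compl.1 (hs2 (mem_supp.2 ⟨e, he2, hw⟩)) (hs1 (mem_supp.2 ⟨e, he1, hw⟩))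

lemma union_mem_matchings {G : SimpleGraph V} {S : Finset V} {M1 M2 : Finset (Sym2 V)}
    (h1 : M1 ∈ matchings G) (h2 : M2 ∈ matchings G)
    (hs1 : supp M1 ⊆ S) (hs2 : supp M2 ⊆ Sᶜ) : M1 ∪ M2 ∈ matchings G := by
  obtain ⟨ha1, hp1⟩ := mem_matchings.1 h1
  obtain ⟨ha2, hp2⟩ := mem_matchings.1 h2
  refine mem_matchings.2 ⟨Finset.union_subset ha1 ha2, ?_⟩
  intro e he f hf hef w hw
  simp only [Finset.coe_union, Set.mem_union, Finset.mem_coe] at he hf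
  rcases he with he | he <;> rcases hf with hf | hf
  · exact hp1 he hf hef w hw
  · exact Finset.mem_compl.1 (hs2 (mem_supp.2 ⟨f, hf, hw.2⟩)) (hs1 (mem_supp.2 ⟨e, he, hw.1⟩))
  · exact Finset.mem_compl.1 (hs2 (mem_supp.2 ⟨e, he, hw.1⟩)) (hs1 (mem_supp.2 ⟨f, hf, hw.2⟩))
  · exact hp2 he hf hef w hw

lemma supp_sdiff_disjoint {G : SimpleGraph V} {M A : Finset (Sym2 V)}
    (hM : M ∈ matchings G) (hA : A ⊆ M) : Disjoint (supp A) (supp (M \ A)) := by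
  obtain ⟨_, hp⟩ := mem_matchings.1 hM
  rw [Finset.disjoint_left]
  intro v hv hv'
  obtain ⟨e, he, hve⟩ := mem_supp.1 hv
  obtain ⟨f, hf, hvf⟩ := mem_supp.1 hv'
  obtain ⟨hfM, hfA⟩ := Finset.mem_sdiff.1 hf
  exact hp (hA he) hfM (fun h => hfA (h ▸ he)) v ⟨hve, hvf⟩

lemma sum_powerset_binom {α : Type*} (s : Finset α) (x y : ℂ) :
    ∑ t ∈ s.powerset, x ^ t.card * y ^ (s.card - t.card) = (x + y) ^ s.card := by
  classical
  have h := Finset.prod_add (fun _ : α => x) (fun _ : α => y) s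
  rw [Finset.prod_const] at h
  rw [h]
  refine Finset.sum_congr rfl (fun t ht => ?_)
  rw [Finset.prod_const, Finset.prod_const, Finset.card_sdiff_of_subset (Finset.mem_powerset.1 ht)]

end ExpType

open ExpType

/-- the modified matching polynomial is of exponential type:
`∑_{S ⊆ V} M(G[S],x) · M(G[V∖S],y) = M(G,x+y)`. -/
theorem modMatch_exponential_type {V : Type*} [Fintype V] (G : SimpleGraph V)
    (x y : ℂ) :
    ∑ S : Finset V,
        modMatch (G.induce (↑S : Set V)) x * modMatch (G.induce (↑(Sᶜ) : Set V)) y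
      = modMatch G (x + y) := by
  classical
  have hL : ∀ S : Finset V,
      modMatch (G.induce (↑S : Set V)) x * modMatch (G.induce (↑(Sᶜ) : Set V)) y
        = ∑ M1 ∈ (matchings G).filter (fun M => supp M ⊆ S),
            ∑ M2 ∈ (matchings G).filter (fun M => supp M ⊆ Sᶜ),
              ((-1 : ℂ) ^ M1.card * x ^ (S.card - M1.card)) *
                ((-1 : ℂ) ^ M2.card * y ^ (Sᶜ.card - M2.card)) := by
    intro S
    rw [modMatch_induce, modMatch_induce, Finset.sum_mul_sum]
  rw [Finset.sum_congr rfl (fun S _ => hL S)]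
  -- the two triple-index finsets
  set f1 : Finset V × Finset (Sym2 V) × Finset (Sym2 V) → ℂ := fun p =>
    ((-1 : ℂ) ^ p.2.1.card * x ^ (p.1.card - p.2.1.card)) *
      ((-1 : ℂ) ^ p.2.2.card * y ^ (p.1ᶜ.card - p.2.2.card)) with hf1
  set g1 : Finset (Sym2 V) × Finset (Sym2 V) × Finset V → ℂ := fun q =>
    (-1 : ℂ) ^ q.1.card *
      (x ^ (q.2.1.card + q.2.2.card) *
        y ^ ((Fintype.card V - q.1.card) - (q.2.1.card + q.2.2.card))) with hg1
  set T1 : Finset (Finset V × Finset (Sym2 V) × Finset (Sym2 V)) :=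
    Finset.univ.filter (fun p => p.2.1 ∈ matchings G ∧ p.2.2 ∈ matchings G ∧
      supp p.2.1 ⊆ p.1 ∧ supp p.2.2 ⊆ p.1ᶜ) with hT1
  set T2 : Finset (Finset (Sym2 V) × Finset (Sym2 V) × Finset V) :=
    Finset.univ.filter (fun q => q.1 ∈ matchings G ∧ q.2.1 ⊆ q.1 ∧
      q.2.2 ⊆ (supp q.1)ᶜ) with hT2
  have h1 : ∑ p ∈ T1, f1 p = ∑ S : Finset V,
      ∑ M1 ∈ (matchings G).filter (fun M => supp M ⊆ S),
        ∑ M2 ∈ (matchings G).filter (fun M => supp M ⊆ Sᶜ),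
          ((-1 : ℂ) ^ M1.card * x ^ (S.card - M1.card)) *
            ((-1 : ℂ) ^ M2.card * y ^ (Sᶜ.card - M2.card)) := by
    rw [Finset.sum_finset_product T1 Finset.univ
      (fun S => ((matchings G).filter (fun M => supp M ⊆ S)) ×ˢ
        ((matchings G).filter (fun M => supp M ⊆ Sᶜ)))
      (by intro p; simp [hT1, Finset.mem_product]; tauto)]
    refine Finset.sum_congr rfl (fun S _ => ?_)
    rw [Finset.sum_product]
  have h2 : ∑ q ∈ T2, g1 q = ∑ M ∈ matchings G,
      ∑ A ∈ M.powerset, ∑ B ∈ ((supp M)ᶜ).powerset,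
        (-1 : ℂ) ^ M.card *
          (x ^ (A.card + B.card) *
            y ^ ((Fintype.card V - M.card) - (A.card + B.card))) := by
    rw [Finset.sum_finset_product T2 (matchings G)
      (fun M => M.powerset ×ˢ ((supp M)ᶜ).powerset)
      (by intro q; simp [hT2, Finset.mem_product, Finset.mem_powerset])]
    refine Finset.sum_congr rfl (fun M _ => ?_)
    rw [Finset.sum_product]
  have h3 : ∑ p ∈ T1, f1 p = ∑ q ∈ T2, g1 q := by
    refine Finset.sum_nbij'
      (i := fun p => (p.2.1 ∪ p.2.2, p.2.1, p.1 \ supp (p.2.1 ∪ p.2.2)))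
      (j := fun q => (supp q.2.1 ∪ q.2.2, q.2.1, q.1 \ q.2.1)) ?_ ?_ ?_ ?_ ?_
    · rintro ⟨S, M1, M2⟩ hp
      simp only [hT1, Finset.mem_filter, Finset.mem_univ, true_and] at hp
      obtain ⟨h1m, h2m, hs1, hs2⟩ := hp
      simp only [hT2, Finset.mem_filter, Finset.mem_univ, true_and]
      refine ⟨union_mem_matchings h1m h2m hs1 hs2, Finset.subset_union_left, ?_⟩
      intro v hv
      exact Finset.mem_compl.2 (Finset.mem_sdiff.1 hv).2
    · rintro ⟨M, A, B⟩ hq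
      simp only [hT2, Finset.mem_filter, Finset.mem_univ, true_and] at hq
      obtain ⟨hMm, hA, hB⟩ := hq
      simp only [hT1, Finset.mem_filter, Finset.mem_univ, true_and]
      refine ⟨subset_mem_matchings hMm hA,
        subset_mem_matchings hMm (Finset.sdiff_subset), Finset.subset_union_left, ?_⟩
      intro v hv
      rw [Finset.mem_compl, Finset.mem_union]
      push_neg
      constructor
      · exact fun h => (Finset.disjoint_left.1 (supp_sdiff_disjoint hMm hA)) h hv
      · intro hvB
        exact Finset.mem_compl.1 (hB hvB) (supp_mono (Finset.sdiff_subset) hv)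
    · rintro ⟨S, M1, M2⟩ hp
      simp only [hT1, Finset.mem_filter, Finset.mem_univ, true_and] at hp
      obtain ⟨h1m, h2m, hs1, hs2⟩ := hp
      have hdisj : Disjoint M1 M2 := disjoint_of_supp_subset hs1 hs2
      have hBeq : S \ supp (M1 ∪ M2) = S \ supp M1 := by
        ext v
        simp only [Finset.mem_sdiff, supp_union, Finset.mem_union]
        constructor
        · rintro ⟨hvS, hv⟩; exact ⟨hvS, fun h => hv (Or.inl h)⟩
        · rintro ⟨hvS, hv⟩
          refine ⟨hvS, ?_⟩
          rintro (h | h)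
          · exact hv h
          · exact Finset.mem_compl.1 (hs2 h) hvS
      dsimp only
      rw [hBeq, Finset.union_sdiff_of_subset hs1, Finset.union_sdiff_cancel_left hdisj]
    · rintro ⟨M, A, B⟩ hq
      simp only [hT2, Finset.mem_filter, Finset.mem_univ, true_and] at hq
      obtain ⟨hMm, hA, hB⟩ := hq
      have hAM : A ∪ M \ A = M := Finset.union_sdiff_of_subset hA
      have hB' : (supp A ∪ B) \ supp M = B := by
        ext v
        simp only [Finset.mem_sdiff, Finset.mem_union]
        constructor
        · rintro ⟨hv | hv, hns⟩
          · exact absurd (supp_mono hA hv) hns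
          · exact hv
        · intro hv
          exact ⟨Or.inr hv, Finset.mem_compl.1 (hB hv)⟩
      dsimp only
      rw [hAM, hB']
    · rintro ⟨S, M1, M2⟩ hp
      simp only [hT1, Finset.mem_filter, Finset.mem_univ, true_and] at hp
      obtain ⟨h1m, h2m, hs1, hs2⟩ := hp
      have hdisj : Disjoint M1 M2 := disjoint_of_supp_subset hs1 hs2
      have hcM : (M1 ∪ M2).card = M1.card + M2.card := Finset.card_union_of_disjoint hdisj
      have hBeq : S \ supp (M1 ∪ M2) = S \ supp M1 := by
        ext v
        simp only [Finset.mem_sdiff, supp_union, Finset.mem_union]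
        constructor
        · rintro ⟨hvS, hv⟩; exact ⟨hvS, fun h => hv (Or.inl h)⟩
        · rintro ⟨hvS, hv⟩
          refine ⟨hvS, ?_⟩
          rintro (h | h)
          · exact hv h
          · exact Finset.mem_compl.1 (hs2 h) hvS
      have hc1 : (supp M1).card = 2 * M1.card := card_supp h1m
      have hc2 : (supp M2).card = 2 * M2.card := card_supp h2m
      have hle1 : 2 * M1.card ≤ S.card := hc1 ▸ Finset.card_le_card hs1
      have hle2 : 2 * M2.card ≤ Sᶜ.card := hc2 ▸ Finset.card_le_card hs2
      have hScc : Sᶜ.card = Fintype.card V - S.card := Finset.card_compl S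
      have hSle : S.card ≤ Fintype.card V := Finset.card_le_univ S
      have hcB : (S \ supp (M1 ∪ M2)).card = S.card - 2 * M1.card := by
        rw [hBeq, Finset.card_sdiff_of_subset hs1, hc1]
      simp only [hf1, hg1]
      rw [hcM, hcB]
      have e1 : S.card - M1.card = M1.card + (S.card - 2 * M1.card) := by omega
      have e2 : Sᶜ.card - M2.card
          = (Fintype.card V - (M1.card + M2.card)) - (M1.card + (S.card - 2 * M1.card)) := by
        omega
      rw [e1, e2, pow_add]
      ring
  rw [← h1, h3, h2, modMatch_eq_sum]
  refine Finset.sum_congr rfl (fun M hM => ?_)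
  have hc : (supp M).card = 2 * M.card := card_supp hM
  have h2n : 2 * M.card ≤ Fintype.card V := two_mul_card_le hM
  have hcc : ((supp M)ᶜ).card = Fintype.card V - 2 * M.card := by
    rw [Finset.card_compl, hc]
  simp only [← Finset.mul_sum]
  congr 1
  have hsplit : ∀ A ∈ M.powerset, ∀ B ∈ ((supp M)ᶜ).powerset,
      x ^ (A.card + B.card) * y ^ ((Fintype.card V - M.card) - (A.card + B.card))
        = (x ^ A.card * y ^ (M.card - A.card)) *
          (x ^ B.card * y ^ (((supp M)ᶜ).card - B.card)) := by
    intro A hA B hB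
    have hA' : A.card ≤ M.card := Finset.card_le_card (Finset.mem_powerset.1 hA)
    have hB' : B.card ≤ ((supp M)ᶜ).card := Finset.card_le_card (Finset.mem_powerset.1 hB)
    have e : (Fintype.card V - M.card) - (A.card + B.card)
        = (M.card - A.card) + (((supp M)ᶜ).card - B.card) := by omega
    rw [e, pow_add, pow_add]
    ring
  calc ∑ A ∈ M.powerset, ∑ B ∈ ((supp M)ᶜ).powerset,
        x ^ (A.card + B.card) * y ^ ((Fintype.card V - M.card) - (A.card + B.card))
      = ∑ A ∈ M.powerset, ∑ B ∈ ((supp M)ᶜ).powerset,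
          (x ^ A.card * y ^ (M.card - A.card)) *
            (x ^ B.card * y ^ (((supp M)ᶜ).card - B.card)) :=
        Finset.sum_congr rfl (fun A hA =>
          Finset.sum_congr rfl (fun B hB => hsplit A hA B hB))
    _ = (∑ A ∈ M.powerset, x ^ A.card * y ^ (M.card - A.card)) *
          (∑ B ∈ ((supp M)ᶜ).powerset, x ^ B.card * y ^ (((supp M)ᶜ).card - B.card)) :=
        (Finset.sum_mul_sum _ _ _ _).symm
    _ = (x + y) ^ M.card * (x + y) ^ ((supp M)ᶜ).card := by
        rw [sum_powerset_binom, sum_powerset_binom]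
    _ = (x + y) ^ (Fintype.card V - M.card) := by
        rw [← pow_add]
        congr 1
        omega
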